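/- Induction step for odd positions: suppose E_L(e_k) = 2^L − k for all k ∈ {0,…,2^L−1} with the convention E_L(e_{2^L−1}) = 1. For x = e_{2k+1} ∈ ℝ^{2^{L+1}} with 2k+1 < 2^{L+1}−1, the first layer output is e_k + e_{k+1}, and hence E_{L+1}(e_{2k+1}) = (2^L − k) + (2^L − (k+1)) = 2^{L+1} − (2k+1). -/
import Mathlib


/-- One layer of the position-encoding network: convolution with the filter
`(1, 2, 1)` followed by subsampling by 2, out-of-range indices treated as `0`
(vectors are modelled as functions `ℕ → ℝ`; index `2t − 1` is out of range for `t = 0`). -/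
noncomputable def posLayer (u : ℕ → ℝ) : ℕ → ℝ := fun t =>
  (if t = 0 then 0 else u (2 * t - 1)) + 2 * u (2 * t) + u (2 * t + 1)

/-- The `L`-layer position-encoding network `E_L`: the `L`-fold composition of `posLayer`. -/
noncomputable def posEnc : ℕ → (ℕ → ℝ) → (ℕ → ℝ)
  | 0, u => u
  | L + 1, u => posEnc L (posLayer u)

/-- The one-hot vector `e_a` (positions indexed from `0`). -/
noncomputable def oneHot (a : ℕ) : ℕ → ℝ := fun i => if i = a then 1 else 0

lemma posLayer_add (u v : ℕ → ℝ) : posLayer (fun i => u i + v i) =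
    fun t => posLayer u t + posLayer v t := by
  funext t
  simp only [posLayer]
  split <;> ring

lemma posEnc_add (L : ℕ) (u v : ℕ → ℝ) :
    posEnc L (fun i => u i + v i) = fun t => posEnc L u t + posEnc L v t := by
  induction L generalizing u v with
  | zero => rfl
  | succ n ih => simp only [posEnc, posLayer_add, ih]

lemma posLayer_oneHot_odd (k : ℕ) :
    posLayer (oneHot (2 * k + 1)) = fun t => oneHot k t + oneHot (k + 1) t := by
  funext t
  simp only [posLayer, oneHot]
  rcases Nat.eq_zero_or_pos t with rfl | ht
  · simp [eq_comm]
  · have ht0 : t ≠ 0 := ht.ne'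
    simp only [if_neg ht0]
    have h1 : (2 * t - 1 = 2 * k + 1) ↔ t = k + 1 := by omega
    have h2 : ¬ (2 * t = 2 * k + 1) := by omega
    have h3 : (2 * t + 1 = 2 * k + 1) ↔ t = k := by omega
    simp [h1, h2, h3]
    split <;> split <;> ring_nf

/-- Induction step for odd positions: if `E_L(e_j) = 2^L − j` for all `j < 2^L`
(with the convention `E_L(e_{2^L−1}) = 1`), then for `x = e_{2k+1} ∈ ℝ^{2^{L+1}}` with
`2k+1 < 2^{L+1} − 1`, the first-layer output is `e_k + e_{k+1}` (on the valid index
range), and hence `E_{L+1}(e_{2k+1}) = (2^L − k) + (2^L − (k+1)) = 2^{L+1} − (2k+1)`. -/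
theorem posEnc_induction_odd (L k : ℕ) (hk : 2 * k + 1 < 2 ^ (L + 1) - 1)
    (hIH : ∀ j, j < 2 ^ L → posEnc L (oneHot j) 0 = (2 ^ L : ℝ) - j) :
    (∀ t, t < 2 ^ L →
        posLayer (oneHot (2 * k + 1)) t = oneHot k t + oneHot (k + 1) t) ∧
    posEnc (L + 1) (oneHot (2 * k + 1)) 0 = (2 ^ (L + 1) : ℝ) - (2 * k + 1) := by
  have hL : posLayer (oneHot (2 * k + 1)) = fun t => oneHot k t + oneHot (k + 1) t :=
    posLayer_oneHot_odd k
  refine ⟨fun t _ => by rw [hL], ?_⟩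
  have hk1 : k + 1 < 2 ^ L := by
    have : 2 ^ (L + 1) = 2 * 2 ^ L := by ring
    omega
  have hk0 : k < 2 ^ L := by omega
  show posEnc L (posLayer (oneHot (2 * k + 1))) 0 = _
  rw [hL, posEnc_add]
  simp only []
  rw [hIH k hk0, hIH (k + 1) hk1]
  push_cast [pow_succ]
  ring
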